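/- For every β_h with 0 < β_h < min(a, β_σ) there exists a constant K_h > 0 such that for all t ∈ [0,T], all x ∈ X and all y₁, y₂ ∈ X with d(y₁,y₂) ≤ 1, |h(t,x,y₁) − h(t,x,y₂)| ≤ K_h d(y₁,y₂)^{β_h}. -/

import Mathlib

open MeasureTheory Set

private lemma log_le_rpow_div {y ε : ℝ} (hy : 1 ≤ y) (hε : 0 < ε) :
    Real.log y ≤ y ^ ε / ε := by
  have hy0 : 0 < y := lt_of_lt_of_le one_pos hy
  have h1 : Real.log (y ^ ε) = ε * Real.log y := Real.log_rpow hy0 ε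
  have h2 : Real.log (y ^ ε) ≤ y ^ ε - 1 := Real.log_le_sub_one_of_pos (Real.rpow_pos_of_pos hy0 ε)
  have h3 : ε * Real.log y ≤ y ^ ε := by nlinarith [Real.rpow_pos_of_pos hy0 ε]
  rw [le_div_iff₀ hε]
  linarith [mul_comm ε (Real.log y)]

theorem statement3
    {X : Type*} [MetricSpace X] [MeasurableSpace X]
    (T : ℝ) (hT : 0 < T)
    (p : ℝ → X → X → ℝ)
    (hp_meas : Measurable fun q : ℝ × X × X => p q.1 q.2.1 q.2.2)
    (hp_nonneg : ∀ t ∈ Set.Ioc (0 : ℝ) T, ∀ x y : X, 0 ≤ p t x y)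
    (c₁ c₂ a b : ℝ) (hc₁ : 0 < c₁) (hc₂ : 0 < c₂) (ha : 0 < a)
    (hb : b ∈ Set.Ioo (0 : ℝ) 1)
    (hp_hold : ∀ t ∈ Set.Ioc (0 : ℝ) T, ∀ x y₁ y₂ : X,
      |p t x y₁ - p t x y₂| ≤ c₁ * t⁻¹ * dist y₁ y₂ ^ a)
    (hp_ub : ∀ t ∈ Set.Ioc (0 : ℝ) T, ∀ x y : X, p t x y ≤ c₂ * t ^ (-b))
    (σ : ℝ → X → ℝ)
    (hσ_meas : Measurable fun q : ℝ × X => σ q.1 q.2)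
    (Cσ Kσ βσ : ℝ) (hCσ : 0 < Cσ) (hKσ : 0 < Kσ) (hβσ : 0 < βσ)
    (hσ_bdd : ∀ s ∈ Set.Icc (0 : ℝ) T, ∀ y : X, |σ s y| ≤ Cσ)
    (hσ_hold : ∀ s ∈ Set.Icc (0 : ℝ) T, ∀ y₁ y₂ : X,
      |σ s y₁ - σ s y₂| ≤ Kσ * dist y₁ y₂ ^ βσ)
    (h : ℝ → X → X → ℝ)
    (hh : ∀ t x y, h t x y = ∫ s in Set.Ioo (0 : ℝ) t, p (t - s) x y * σ s y)
    (βh : ℝ) (hβh0 : 0 < βh) (hβh : βh < min a βσ) :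
    ∃ Kh : ℝ, 0 < Kh ∧ ∀ t ∈ Set.Icc (0 : ℝ) T, ∀ x y₁ y₂ : X, dist y₁ y₂ ≤ 1 →
      |h t x y₁ - h t x y₂| ≤ Kh * dist y₁ y₂ ^ βh := by
  obtain ⟨hb0, hb1⟩ := hb
  have h1b : (0:ℝ) < 1 - b := by linarith
  have hβa : βh < a := lt_of_lt_of_le hβh (min_le_left _ _)
  have hβσ' : βh < βσ := lt_of_lt_of_le hβh (min_le_right _ _)
  have haβ : (0:ℝ) < a - βh := by linarith
  obtain ⟨γ, hγdef⟩ : ∃ γ : ℝ, γ = βh / (1 - b) := ⟨_, rfl⟩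
  have hγ0 : 0 < γ := by rw [hγdef]; exact div_pos hβh0 h1b
  obtain ⟨A, hAdef⟩ : ∃ A : ℝ, A = max (Real.log T) 0 := ⟨_, rfl⟩
  have hA0 : 0 ≤ A := by rw [hAdef]; exact le_max_right _ _
  obtain ⟨Kh, hKhdef⟩ : ∃ Kh : ℝ, Kh = Cσ * c₁ * (A + γ / (a - βh))
      + c₂ * Kσ * (T ^ (1 - b) / (1 - b)) + 2 * Cσ * c₂ / (1 - b) + 1 := ⟨_, rfl⟩
  have hKh0 : 0 < Kh := by
    have h1 : 0 ≤ Cσ * c₁ * (A + γ / (a - βh)) := by positivity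
    have h2 : 0 ≤ c₂ * Kσ * (T ^ (1 - b) / (1 - b)) := by positivity
    have h3 : 0 ≤ 2 * Cσ * c₂ / (1 - b) := by positivity
    rw [hKhdef]; linarith
  refine ⟨Kh, hKh0, ?_⟩
  intro t ht x y₁ y₂ hd1
  obtain ⟨d, hddef⟩ : ∃ d : ℝ, d = dist y₁ y₂ := ⟨_, rfl⟩
  rw [← hddef] at hd1 ⊢
  have hd0 : 0 ≤ d := hddef ▸ dist_nonneg
  rcases eq_or_lt_of_le hd0 with hd0' | hd0'
  · have : y₁ = y₂ := by
      rw [hddef] at hd0'; rwa [eq_comm, dist_eq_zero] at hd0'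
    subst this
    simp only [sub_self, abs_zero]
    positivity
  rcases eq_or_lt_of_le ht.1 with ht0 | ht0
  · have hI : Set.Ioo (0:ℝ) t = ∅ := by rw [← ht0]; exact Set.Ioo_self 0
    rw [hh, hh, hI]
    simp only [Measure.restrict_empty, integral_zero_measure, sub_self, abs_zero]
    positivity
  -- main case : 0 < d ≤ 1, 0 < t ≤ T
  have htT : t ≤ T := ht.2
  obtain ⟨δ, hδdef⟩ : ∃ δ : ℝ, δ = d ^ γ := ⟨_, rfl⟩
  have hδ0 : 0 < δ := by rw [hδdef]; exact Real.rpow_pos_of_pos hd0' γ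
  have hδ1 : δ ≤ 1 := by rw [hδdef]; exact Real.rpow_le_one hd0 hd1 hγ0.le
  have hδβ : δ ^ (1 - b) = d ^ βh := by
    rw [hδdef, ← Real.rpow_mul hd0]
    congr 1
    rw [hγdef]
    field_simp
  obtain ⟨t', ht'def⟩ : ∃ t' : ℝ, t' = max (t - δ) 0 := ⟨_, rfl⟩
  have ht'0 : 0 ≤ t' := by rw [ht'def]; exact le_max_right _ _
  have ht't : t' < t := by
    rw [ht'def, max_lt_iff]; exact ⟨by linarith, ht0⟩
  obtain ⟨δ', hδ'def⟩ : ∃ δ' : ℝ, δ' = t - t' := ⟨_, rfl⟩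
  have hδ'0 : 0 < δ' := by rw [hδ'def]; linarith
  have hδ'δ : δ' ≤ δ := by
    rw [hδ'def, ht'def]
    have := le_max_left (t - δ) (0:ℝ)
    linarith
  -- measurability
  have hmeas : ∀ y : X, Measurable fun s => p (t - s) x y * σ s y := by
    intro y
    have m1 : Measurable fun s : ℝ => (t - s, (x, y)) :=
      (measurable_const.sub measurable_id).prodMk measurable_const
    have m2 : Measurable fun s : ℝ => (s, y) := measurable_id.prodMk measurable_const
    exact (hp_meas.comp m1).mul (hσ_meas.comp m2)
  -- dominating function
  have hg_int : IntervalIntegrable (fun s : ℝ => c₂ * (t - s) ^ (-b) * Cσ) volume 0 t := by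
    have h1 : IntervalIntegrable (fun u : ℝ => u ^ (-b)) volume 0 t :=
      intervalIntegral.intervalIntegrable_rpow' (by linarith)
    have h2 := (h1.comp_sub_left t).symm
    simp only [sub_zero, sub_self] at h2
    exact (h2.const_mul c₂).mul_const Cσ
  have hae_ne : ∀ᵐ s : ℝ ∂volume, s ≠ t := by
    have hset : {s : ℝ | ¬ s ≠ t} = {t} := by ext s; simp
    rw [ae_iff, hset]
    exact measure_singleton t
  have hfacts : ∀ s ∈ Set.Ioc (0:ℝ) t, s ≠ t →
      (t - s ∈ Set.Ioc (0:ℝ) T ∧ s ∈ Set.Icc (0:ℝ) T) := by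
    intro s hs hne
    have hst : s < t := lt_of_le_of_ne hs.2 hne
    exact ⟨⟨by linarith, by linarith [hs.1]⟩, ⟨hs.1.le, le_trans hs.2 htT⟩⟩
  -- integrability of integrands
  have hint : ∀ y : X, IntervalIntegrable (fun s => p (t - s) x y * σ s y) volume 0 t := by
    intro y
    rw [intervalIntegrable_iff_integrableOn_Ioc_of_le ht0.le]
    refine Integrable.mono' hg_int.1 ((hmeas y).aestronglyMeasurable.restrict) ?_
    filter_upwards [ae_restrict_mem measurableSet_Ioc, ae_restrict_of_ae hae_ne] with s hs hne
    obtain ⟨hts, hsI⟩ := hfacts s hs hne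
    have hp1 : 0 ≤ p (t - s) x y := hp_nonneg _ hts x y
    have hp2 : p (t - s) x y ≤ c₂ * (t - s) ^ (-b) := hp_ub _ hts x y
    have hσ1 : |σ s y| ≤ Cσ := hσ_bdd s hsI y
    have hrne : (0:ℝ) ≤ c₂ * (t - s) ^ (-b) :=
      mul_nonneg hc₂.le (Real.rpow_nonneg (by linarith [hts.1]) _)
    rw [Real.norm_eq_abs, abs_mul, abs_of_nonneg hp1]
    exact mul_le_mul hp2 hσ1 (abs_nonneg _) hrne
  have hint₁ := hint y₁
  have hint₂ := hint y₂
  have ht'mem : t' ∈ Set.uIcc (0:ℝ) t := by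
    rw [Set.mem_uIcc]; left; exact ⟨ht'0, ht't.le⟩
  have hsub : Set.uIcc (0:ℝ) t' ⊆ Set.uIcc (0:ℝ) t :=
    Set.uIcc_subset_uIcc Set.left_mem_uIcc ht'mem
  have hsub2 : Set.uIcc t' t ⊆ Set.uIcc (0:ℝ) t :=
    Set.uIcc_subset_uIcc ht'mem Set.right_mem_uIcc
  have hintA₁ := hint₁.mono_set hsub
  have hintA₂ := hint₂.mono_set hsub
  have hintB₁ := hint₁.mono_set hsub2
  have hintB₂ := hint₂.mono_set hsub2
  -- splitting
  have hsplit : ∀ y, h t x y = (∫ s in (0:ℝ)..t', p (t - s) x y * σ s y)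
      + ∫ s in t'..t, p (t - s) x y * σ s y := by
    intro y
    rw [hh, ← integral_Ioc_eq_integral_Ioo, ← intervalIntegral.integral_of_le ht0.le,
      intervalIntegral.integral_add_adjacent_intervals ((hint y).mono_set hsub)
        ((hint y).mono_set hsub2)]
  -- Near part
  have hnear_int : IntervalIntegrable (fun s : ℝ => 2 * Cσ * c₂ * (t - s) ^ (-b)) volume t' t := by
    have h1 : IntervalIntegrable (fun u : ℝ => u ^ (-b)) volume 0 t :=
      intervalIntegral.intervalIntegrable_rpow' (by linarith)
    have h2 := (h1.comp_sub_left t).symm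
    simp only [sub_zero, sub_self] at h2
    exact (h2.const_mul (2 * Cσ * c₂)).mono_set hsub2
  have hcomp : (∫ s in t'..t, 2 * Cσ * c₂ * (t - s) ^ (-b))
      = 2 * Cσ * c₂ * (δ' ^ (1 - b) / (1 - b)) := by
    rw [intervalIntegral.integral_const_mul]
    congr 1
    rw [intervalIntegral.integral_comp_sub_left (fun u : ℝ => u ^ (-b)) t, sub_self,
      integral_rpow (Or.inl (by linarith)), Real.zero_rpow (by linarith : -b + 1 ≠ 0),
      ← hδ'def, show -b + 1 = 1 - b from by ring]
    ring
  have hnear : |(∫ s in t'..t, p (t - s) x y₁ * σ s y₁) - ∫ s in t'..t, p (t - s) x y₂ * σ s y₂|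
      ≤ 2 * Cσ * c₂ / (1 - b) * d ^ βh := by
    rw [← intervalIntegral.integral_sub hintB₁ hintB₂]
    have hbd : ∀ᵐ s ∂(volume.restrict (Set.uIoc t' t)),
        ‖p (t - s) x y₁ * σ s y₁ - p (t - s) x y₂ * σ s y₂‖
          ≤ 2 * Cσ * c₂ * (t - s) ^ (-b) := by
      rw [Set.uIoc_of_le ht't.le]
      filter_upwards [ae_restrict_mem measurableSet_Ioc, ae_restrict_of_ae hae_ne] with s hs hne
      have hs' : s ∈ Set.Ioc (0:ℝ) t := ⟨lt_of_le_of_lt ht'0 hs.1, hs.2⟩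
      obtain ⟨hts, hsI⟩ := hfacts s hs' hne
      have hp1 := hp_nonneg _ hts x y₁
      have hp2 := hp_nonneg _ hts x y₂
      have hu1 := hp_ub _ hts x y₁
      have hu2 := hp_ub _ hts x y₂
      have hσ1 := hσ_bdd s hsI y₁
      have hσ2 := hσ_bdd s hsI y₂
      have hrne : (0:ℝ) ≤ c₂ * (t - s) ^ (-b) :=
        mul_nonneg hc₂.le (Real.rpow_nonneg (by linarith [hts.1]) _)
      have e1 : |p (t - s) x y₁ * σ s y₁| ≤ c₂ * (t - s) ^ (-b) * Cσ := by
        rw [abs_mul, abs_of_nonneg hp1]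
        exact mul_le_mul hu1 hσ1 (abs_nonneg _) hrne
      have e2 : |p (t - s) x y₂ * σ s y₂| ≤ c₂ * (t - s) ^ (-b) * Cσ := by
        rw [abs_mul, abs_of_nonneg hp2]
        exact mul_le_mul hu2 hσ2 (abs_nonneg _) hrne
      rw [Real.norm_eq_abs]
      calc |p (t - s) x y₁ * σ s y₁ - p (t - s) x y₂ * σ s y₂|
          ≤ |p (t - s) x y₁ * σ s y₁| + |p (t - s) x y₂ * σ s y₂| := abs_sub _ _
        _ ≤ 2 * Cσ * c₂ * (t - s) ^ (-b) := by linarith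
    have hkey := intervalIntegral.norm_integral_le_abs_of_norm_le hbd hnear_int
    rw [Real.norm_eq_abs] at hkey
    refine le_trans hkey ?_
    have hval : 0 ≤ 2 * Cσ * c₂ * (δ' ^ (1 - b) / (1 - b)) :=
      mul_nonneg (by positivity) (div_nonneg (Real.rpow_nonneg hδ'0.le _) h1b.le)
    rw [hcomp, abs_of_nonneg hval]
    have hmono : δ' ^ (1 - b) ≤ d ^ βh := by
      rw [← hδβ]
      exact Real.rpow_le_rpow hδ'0.le hδ'δ h1b.le
    calc 2 * Cσ * c₂ * (δ' ^ (1 - b) / (1 - b)) ≤ 2 * Cσ * c₂ * (d ^ βh / (1 - b)) := by gcongr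
      _ = 2 * Cσ * c₂ / (1 - b) * d ^ βh := by ring
  -- Far part
  obtain ⟨C1, hC1def⟩ : ∃ C1 : ℝ, C1 = c₁ * d ^ a * Cσ := ⟨_, rfl⟩
  obtain ⟨C2, hC2def⟩ : ∃ C2 : ℝ, C2 = c₂ * (Kσ * d ^ βσ) := ⟨_, rfl⟩
  have hC10 : 0 < C1 := by rw [hC1def]; positivity
  have hC20 : 0 < C2 := by rw [hC2def]; positivity
  have hts_lb : ∀ s ∈ Set.uIcc (0:ℝ) t', δ' ≤ t - s := by
    intro s hs
    rw [Set.uIcc_of_le ht'0] at hs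
    rw [hδ'def]
    linarith [hs.2]
  have hinv_cont : ContinuousOn (fun s : ℝ => (t - s)⁻¹) (Set.uIcc 0 t') := by
    apply ContinuousOn.inv₀ ((continuous_sub_left t).continuousOn)
    intro s hs
    have := hts_lb s hs
    intro hcon; rw [hcon] at this; linarith
  have hrpow_cont : ContinuousOn (fun s : ℝ => (t - s) ^ (-b)) (Set.uIcc 0 t') := by
    apply ContinuousOn.rpow_const ((continuous_sub_left t).continuousOn)
    intro s hs
    have := hts_lb s hs
    left; intro hcon; rw [hcon] at this; linarith
  have hfar_int1 : IntervalIntegrable (fun s : ℝ => (t - s)⁻¹) volume 0 t' :=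
    hinv_cont.intervalIntegrable
  have hfar_int2 : IntervalIntegrable (fun s : ℝ => (t - s) ^ (-b)) volume 0 t' :=
    hrpow_cont.intervalIntegrable
  have hfar_int : IntervalIntegrable (fun s : ℝ => C1 * (t - s)⁻¹ + C2 * (t - s) ^ (-b))
      volume 0 t' := (hfar_int1.const_mul C1).add (hfar_int2.const_mul C2)
  obtain ⟨L, hLdef⟩ : ∃ L : ℝ, L = -Real.log d := ⟨_, rfl⟩
  have hL0 : 0 ≤ L := by
    rw [hLdef, neg_nonneg]
    exact Real.log_nonpos hd0 hd1
  have hI1 : (∫ s in (0:ℝ)..t', (t - s)⁻¹) = Real.log (t / δ') := by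
    rw [intervalIntegral.integral_comp_sub_left (fun u : ℝ => u⁻¹) t, sub_zero]
    rw [integral_inv, ← hδ'def]
    intro hc
    rw [Set.uIcc_of_le (by linarith : t - t' ≤ t)] at hc
    have h1 := hc.1
    rw [hδ'def] at hδ'0
    linarith
  have hI2 : (∫ s in (0:ℝ)..t', (t - s) ^ (-b)) = (t ^ (1-b) - δ' ^ (1-b)) / (1-b) := by
    rw [intervalIntegral.integral_comp_sub_left (fun u : ℝ => u ^ (-b)) t, sub_zero,
      integral_rpow (Or.inl (by linarith)), ← hδ'def, show -b + 1 = 1 - b from by ring]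
  have hIcalc : (∫ s in (0:ℝ)..t', C1 * (t - s)⁻¹ + C2 * (t - s) ^ (-b))
      = C1 * Real.log (t / δ') + C2 * ((t ^ (1-b) - δ' ^ (1-b)) / (1-b)) := by
    rw [intervalIntegral.integral_add (hfar_int1.const_mul C1) (hfar_int2.const_mul C2),
      intervalIntegral.integral_const_mul, intervalIntegral.integral_const_mul, hI1, hI2]
  have hlog : Real.log (t / δ') ≤ A + γ * L := by
    rcases le_total δ t with hcase | hcase
    · have ht'eq : t' = t - δ := by
        rw [ht'def, max_eq_left (by linarith)]
      have hδ'eq : δ' = δ := by rw [hδ'def, ht'eq]; ring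
      rw [hδ'eq, Real.log_div (by linarith) (by linarith), hδdef, Real.log_rpow hd0']
      have h1 : Real.log t ≤ Real.log T := Real.log_le_log ht0 htT
      have hAT : Real.log T ≤ A := by rw [hAdef]; exact le_max_left _ _
      have h2 : γ * L = γ * (-Real.log d) := by rw [hLdef]
      linarith
    · have ht'eq : t' = 0 := by
        rw [ht'def, max_eq_right (by linarith)]
      have hδ'eq : δ' = t := by rw [hδ'def, ht'eq]; ring
      rw [hδ'eq, div_self (ne_of_gt ht0), Real.log_one]
      have := mul_nonneg hγ0.le hL0
      linarith
  have hlog0 : 0 ≤ Real.log (t / δ') := by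
    apply Real.log_nonneg
    rw [le_div_iff₀ hδ'0, one_mul, hδ'def]
    linarith
  have hrp0 : 0 ≤ (t ^ (1-b) - δ' ^ (1-b)) / (1-b) := by
    apply div_nonneg _ h1b.le
    have := Real.rpow_le_rpow hδ'0.le (by rw [hδ'def]; linarith : δ' ≤ t) h1b.le
    linarith
  have hrp : (t ^ (1-b) - δ' ^ (1-b)) / (1-b) ≤ T ^ (1-b) / (1-b) := by
    have h1 : t ^ (1-b) ≤ T ^ (1-b) := Real.rpow_le_rpow ht0.le htT h1b.le
    have h2 : 0 ≤ δ' ^ (1-b) := Real.rpow_nonneg hδ'0.le _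
    apply (div_le_div_iff_of_pos_right h1b).mpr
    linarith
  have hfar : |(∫ s in (0:ℝ)..t', p (t - s) x y₁ * σ s y₁)
        - ∫ s in (0:ℝ)..t', p (t - s) x y₂ * σ s y₂|
      ≤ C1 * (A + γ * L) + C2 * (T ^ (1 - b) / (1 - b)) := by
    rw [← intervalIntegral.integral_sub hintA₁ hintA₂]
    have hbd : ∀ᵐ s ∂(volume.restrict (Set.uIoc 0 t')),
        ‖p (t - s) x y₁ * σ s y₁ - p (t - s) x y₂ * σ s y₂‖
          ≤ C1 * (t - s)⁻¹ + C2 * (t - s) ^ (-b) := by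
      rw [Set.uIoc_of_le ht'0]
      filter_upwards [ae_restrict_mem measurableSet_Ioc] with s hs
      have hst : s < t := lt_of_le_of_lt hs.2 ht't
      have hts : t - s ∈ Set.Ioc (0:ℝ) T := ⟨by linarith, by linarith [hs.1]⟩
      have hsI : s ∈ Set.Icc (0:ℝ) T := ⟨hs.1.le, le_trans hs.2 (le_trans ht't.le htT)⟩
      have hp2 := hp_nonneg _ hts x y₂
      have hu2 := hp_ub _ hts x y₂
      have hσ1 := hσ_bdd s hsI y₁
      have hph := hp_hold _ hts x y₁ y₂
      have hσh := hσ_hold s hsI y₁ y₂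
      rw [← hddef] at hph hσh
      have key : p (t - s) x y₁ * σ s y₁ - p (t - s) x y₂ * σ s y₂
          = (p (t - s) x y₁ - p (t - s) x y₂) * σ s y₁
            + p (t - s) x y₂ * (σ s y₁ - σ s y₂) := by ring
      rw [Real.norm_eq_abs, key]
      have e1 : |(p (t - s) x y₁ - p (t - s) x y₂) * σ s y₁| ≤ c₁ * (t - s)⁻¹ * d ^ a * Cσ := by
        rw [abs_mul]
        refine mul_le_mul hph hσ1 (abs_nonneg _) ?_
        exact mul_nonneg (mul_nonneg hc₁.le (inv_nonneg.mpr (by linarith [hts.1])))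
          (Real.rpow_nonneg hd0 a)
      have e2 : |p (t - s) x y₂ * (σ s y₁ - σ s y₂)|
          ≤ c₂ * (t - s) ^ (-b) * (Kσ * d ^ βσ) := by
        rw [abs_mul, abs_of_nonneg hp2]
        refine mul_le_mul hu2 hσh (abs_nonneg _) ?_
        exact mul_nonneg hc₂.le (Real.rpow_nonneg (by linarith [hts.1]) _)
      calc |(p (t - s) x y₁ - p (t - s) x y₂) * σ s y₁
            + p (t - s) x y₂ * (σ s y₁ - σ s y₂)|
          ≤ |(p (t - s) x y₁ - p (t - s) x y₂) * σ s y₁|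
            + |p (t - s) x y₂ * (σ s y₁ - σ s y₂)| := abs_add_le _ _
        _ ≤ C1 * (t - s)⁻¹ + C2 * (t - s) ^ (-b) := by
            rw [hC1def, hC2def]
            have r1 : c₁ * (t - s)⁻¹ * d ^ a * Cσ = c₁ * d ^ a * Cσ * (t - s)⁻¹ := by ring
            have r2 : c₂ * (t - s) ^ (-b) * (Kσ * d ^ βσ)
                = c₂ * (Kσ * d ^ βσ) * (t - s) ^ (-b) := by ring
            rw [r1] at e1; rw [r2] at e2
            linarith
    have hkey := intervalIntegral.norm_integral_le_abs_of_norm_le hbd hfar_int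
    rw [Real.norm_eq_abs, hIcalc] at hkey
    have habs : 0 ≤ C1 * Real.log (t / δ') + C2 * ((t ^ (1-b) - δ' ^ (1-b)) / (1-b)) := by
      have := mul_nonneg hC10.le hlog0
      have := mul_nonneg hC20.le hrp0
      linarith
    rw [abs_of_nonneg habs] at hkey
    have m1 := mul_le_mul_of_nonneg_left hlog hC10.le
    have m2 := mul_le_mul_of_nonneg_left hrp hC20.le
    linarith
  -- combine
  have hcomb : |h t x y₁ - h t x y₂|
      ≤ C1 * (A + γ * L) + C2 * (T ^ (1 - b) / (1 - b)) + 2 * Cσ * c₂ / (1 - b) * d ^ βh := by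
    rw [hsplit y₁, hsplit y₂]
    have habs2 : |((∫ s in (0:ℝ)..t', p (t - s) x y₁ * σ s y₁)
          + ∫ s in t'..t, p (t - s) x y₁ * σ s y₁)
        - ((∫ s in (0:ℝ)..t', p (t - s) x y₂ * σ s y₂)
          + ∫ s in t'..t, p (t - s) x y₂ * σ s y₂)|
        ≤ |(∫ s in (0:ℝ)..t', p (t - s) x y₁ * σ s y₁)
            - ∫ s in (0:ℝ)..t', p (t - s) x y₂ * σ s y₂|
          + |(∫ s in t'..t, p (t - s) x y₁ * σ s y₁)
            - ∫ s in t'..t, p (t - s) x y₂ * σ s y₂| := by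
      have : ((∫ s in (0:ℝ)..t', p (t - s) x y₁ * σ s y₁)
          + ∫ s in t'..t, p (t - s) x y₁ * σ s y₁)
        - ((∫ s in (0:ℝ)..t', p (t - s) x y₂ * σ s y₂)
          + ∫ s in t'..t, p (t - s) x y₂ * σ s y₂)
        = ((∫ s in (0:ℝ)..t', p (t - s) x y₁ * σ s y₁)
            - ∫ s in (0:ℝ)..t', p (t - s) x y₂ * σ s y₂)
          + ((∫ s in t'..t, p (t - s) x y₁ * σ s y₁)
            - ∫ s in t'..t, p (t - s) x y₂ * σ s y₂) := by ring
      rw [this]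
      exact abs_add_le _ _
    linarith
  -- final d-power estimates
  have hD0 : (0:ℝ) ≤ d ^ βh := Real.rpow_nonneg hd0 βh
  have hda : d ^ a ≤ d ^ βh := Real.rpow_le_rpow_of_exponent_ge hd0' hd1 hβa.le
  have hdσ : d ^ βσ ≤ d ^ βh := Real.rpow_le_rpow_of_exponent_ge hd0' hd1 hβσ'.le
  have hdL : d ^ a * L ≤ d ^ βh / (a - βh) := by
    have hy : 1 ≤ d⁻¹ := (one_le_inv₀ hd0').mpr hd1
    have hlogL : L ≤ (d⁻¹) ^ (a - βh) / (a - βh) := by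
      have := log_le_rpow_div hy haβ
      rwa [Real.log_inv, ← hLdef] at this
    have hinv : (d⁻¹) ^ (a - βh) = d ^ (-(a - βh)) := by
      rw [Real.inv_rpow hd0, Real.rpow_neg hd0]
    calc d ^ a * L ≤ d ^ a * ((d⁻¹) ^ (a - βh) / (a - βh)) :=
          mul_le_mul_of_nonneg_left hlogL (Real.rpow_nonneg hd0 a)
      _ = (d ^ a * d ^ (-(a - βh))) / (a - βh) := by rw [hinv]; ring
      _ = d ^ βh / (a - βh) := by
          rw [← Real.rpow_add hd0', show a + -(a - βh) = βh from by ring]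
  have e1 : C1 * (A + γ * L) ≤ Cσ * c₁ * (A + γ / (a - βh)) * d ^ βh := by
    rw [hC1def]
    calc c₁ * d ^ a * Cσ * (A + γ * L) = Cσ * c₁ * (A * (d ^ a) + γ * (d ^ a * L)) := by ring
      _ ≤ Cσ * c₁ * (A * d ^ βh + γ * (d ^ βh / (a - βh))) := by
          apply mul_le_mul_of_nonneg_left _ (by positivity)
          have m1 := mul_le_mul_of_nonneg_left hdL hγ0.le
          have m2 := mul_le_mul_of_nonneg_left hda hA0
          linarith
      _ = Cσ * c₁ * (A + γ / (a - βh)) * d ^ βh := by ring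
  have e2 : C2 * (T ^ (1 - b) / (1 - b)) ≤ c₂ * Kσ * (T ^ (1 - b) / (1 - b)) * d ^ βh := by
    rw [hC2def]
    calc c₂ * (Kσ * d ^ βσ) * (T ^ (1 - b) / (1 - b))
        = c₂ * Kσ * (T ^ (1 - b) / (1 - b)) * d ^ βσ := by ring
      _ ≤ c₂ * Kσ * (T ^ (1 - b) / (1 - b)) * d ^ βh := by
          apply mul_le_mul_of_nonneg_left hdσ (by positivity)
  have hfin : Kh * d ^ βh = Cσ * c₁ * (A + γ / (a - βh)) * d ^ βh
      + c₂ * Kσ * (T ^ (1 - b) / (1 - b)) * d ^ βh + 2 * Cσ * c₂ / (1 - b) * d ^ βh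
      + d ^ βh := by
    rw [hKhdef]; ring
  linarith
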